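/- arXiv:quant-ph/0402143 — 8 statements merged into one kernel-verified Lean document; each statement's English description precedes it below -/
import Mathlib

section
/- For every N×N complex unitary matrix U and every real vector λ ∈ ℝ^N with Λ = Diag(λ), the vector of diagonal entries of U† L(U Λ U†) U equals the real vector (Θᵀ B Θ + Diag(Θᵀ d)) λ, where Θ is the N×N real matrix with entries Θ_ij = |U_ij|². -/
open Matrix Finset

/-- The spontaneous-emission Lindbladian
`L(ρ) = Σ_{i,j} γ_ij (E_ij ρ E_ij† − (1/2)(E_ij† E_ij ρ + ρ E_ij† E_ij))`. -/
noncomputable def lindblad {N : ℕ} (γ : Fin N → Fin N → ℝ)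
    (ρ : Matrix (Fin N) (Fin N) ℂ) : Matrix (Fin N) (Fin N) ℂ :=
  ∑ i : Fin N, ∑ j : Fin N, (γ i j : ℂ) •
    (Matrix.single i j 1 * ρ * (Matrix.single i j 1)ᴴ
      - (1 / 2 : ℂ) • ((Matrix.single i j 1)ᴴ * Matrix.single i j 1 * ρ
          + ρ * (Matrix.single i j 1)ᴴ * Matrix.single i j 1))

lemma conj_std {N : ℕ} (i j : Fin N) :
    (Matrix.single i j (1:ℂ))ᴴ = Matrix.single j i 1 := by
  ext a b
  simp [Matrix.single, Matrix.conjTranspose_apply, and_comm]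

lemma lindblad_apply {N : ℕ} (γ : Fin N → Fin N → ℝ) (ρ : Matrix (Fin N) (Fin N) ℂ)
    (a b : Fin N) :
    lindblad γ ρ a b = (if a = b then ∑ j, (γ a j : ℂ) * ρ j j else 0)
      - (1/2 : ℂ) * ((∑ i, (γ i a : ℂ)) + ∑ i, (γ i b : ℂ)) * ρ a b := by
  have h1 : ∀ i j : Fin N, (Matrix.single i j (1:ℂ) * ρ *
      (Matrix.single i j (1:ℂ))ᴴ) a b
      = if i = a ∧ i = b then ρ j j else 0 := by
    intro i j
    rw [conj_std]
    simp [Matrix.mul_apply, Matrix.single, ite_and, mul_comm]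
    split_ifs <;> simp_all
  have h2 : ∀ i j : Fin N, ((Matrix.single i j (1:ℂ))ᴴ *
      Matrix.single i j (1:ℂ) * ρ) a b = if j = a then ρ j b else 0 := by
    intro i j
    rw [conj_std, Matrix.single_mul_single_same, one_mul]
    simp [Matrix.mul_apply, Matrix.single, ite_and]
  have h3 : ∀ i j : Fin N, (ρ * ((Matrix.single i j (1:ℂ))ᴴ *
      Matrix.single i j (1:ℂ))) a b = if j = b then ρ a j else 0 := by
    intro i j
    rw [conj_std, Matrix.single_mul_single_same, one_mul]
    simp [Matrix.mul_apply, Matrix.single, ite_and]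
  simp only [lindblad, Matrix.sum_apply, Matrix.smul_apply, Matrix.sub_apply,
    Matrix.add_apply, smul_eq_mul, mul_assoc ρ, h1, h2, h3]
  simp only [mul_sub, mul_add, mul_ite, mul_zero, mul_one,
    Finset.sum_sub_distrib, Finset.sum_add_distrib, ite_and,
    Finset.sum_ite_eq, Finset.sum_ite_eq', Finset.mem_univ, if_true]
  have e1 : (∑ x : Fin N, ∑ x_1 : Fin N,
      if x = a then if x = b then (γ x x_1 : ℂ) * ρ x_1 x_1 else 0 else 0)
      = if a = b then ∑ j, (γ a j : ℂ) * ρ j j else 0 := by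
    rw [Finset.sum_congr rfl (fun x _ => show _ = if x = a then
        (if a = b then ∑ j, (γ a j : ℂ) * ρ j j else 0) else 0 from by
      split_ifs <;> simp_all)]
    simp
  rw [e1, ← Finset.sum_mul, ← Finset.sum_mul]
  ring

/-- For every unitary `U` and real vector `lam` with `Λ = Diag(lam)`, the diagonal of
`U† L(U Λ U†) U` equals the real vector `(Θᵀ B Θ + Diag(Θᵀ d)) lam`, where
`Θ_ij = |U_ij|²`. -/
theorem diag_of_conjugated_lindblad (N : ℕ) (hN : 0 < N)
    (γ : Fin N → Fin N → ℝ) (hγ : ∀ i j, 0 ≤ γ i j) (hγdiag : ∀ i, γ i i = 0)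
    (U : Matrix (Fin N) (Fin N) ℂ) (hU : U ∈ Matrix.unitaryGroup (Fin N) ℂ)
    (lam : Fin N → ℝ) :
    let Λ : Matrix (Fin N) (Fin N) ℂ := Matrix.diagonal (fun i => (lam i : ℂ))
    let Θ : Matrix (Fin N) (Fin N) ℝ := Matrix.of fun i j => ‖U i j‖ ^ 2
    let B : Matrix (Fin N) (Fin N) ℝ := Matrix.of fun i j => if i = j then 0 else γ i j
    let d : Fin N → ℝ := fun j => -∑ k : Fin N, γ k j
    ∀ k : Fin N,
      (Uᴴ * lindblad γ (U * Λ * Uᴴ) * U) k k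
        = (((Θᵀ * B * Θ + Matrix.diagonal (Θᵀ.mulVec d)).mulVec lam) k : ℂ) := by
  intro Λ Θ B d k
  set ρ : Matrix (Fin N) (Fin N) ℂ := U * Λ * Uᴴ with hρ
  have huU : Uᴴ * U = 1 := by
    have := hU.1
    rwa [Matrix.star_eq_conjTranspose] at this
  -- the Lindbladian as a matrix
  set C : Matrix (Fin N) (Fin N) ℂ :=
    Matrix.diagonal (fun a => (∑ i, (γ i a : ℂ))) with hC
  set D : Matrix (Fin N) (Fin N) ℂ :=
    Matrix.diagonal (fun a => ∑ j, (γ a j : ℂ) * ρ j j) with hD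
  have hL : lindblad γ ρ = D - (1/2 : ℂ) • (C * ρ + ρ * C) := by
    ext a b
    rw [lindblad_apply]
    by_cases hab : a = b <;>
      simp [hab, hD, hC, Matrix.diagonal_mul, Matrix.mul_diagonal,
        Matrix.diagonal_apply, Matrix.smul_apply] <;> ring
  have hρU : ρ * U = U * Λ := by
    rw [hρ, Matrix.mul_assoc, huU, Matrix.mul_one]
  have hUρ : Uᴴ * ρ = Λ * Uᴴ := by
    rw [hρ, ← Matrix.mul_assoc, ← Matrix.mul_assoc, huU, Matrix.one_mul]
  have key : Uᴴ * lindblad γ ρ * U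
      = Uᴴ * D * U - (1/2 : ℂ) • (Uᴴ * C * U * Λ + Λ * (Uᴴ * C * U)) := by
    rw [hL]
    rw [Matrix.mul_sub, Matrix.sub_mul, Matrix.mul_smul, Matrix.smul_mul]
    congr 1
    rw [Matrix.mul_add, Matrix.add_mul]
    have h1 : Uᴴ * (C * ρ) * U = Uᴴ * C * U * Λ := by
      rw [← Matrix.mul_assoc, Matrix.mul_assoc (Uᴴ * C) ρ U, hρU, ← Matrix.mul_assoc]
    have h2 : Uᴴ * (ρ * C) * U = Λ * (Uᴴ * C * U) := by
      rw [← Matrix.mul_assoc, hUρ, Matrix.mul_assoc, Matrix.mul_assoc,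
        ← Matrix.mul_assoc Uᴴ C U]
    rw [h1, h2]
  have hTheta : ∀ a b : Fin N, (starRingEnd ℂ) (U a b) * U a b = ((Θ a b : ℝ) : ℂ) := by
    intro a b
    rw [mul_comm, Complex.mul_conj]
    norm_cast
    simp [Θ, Complex.sq_norm]
  have ediag : ∀ (v : Fin N → ℂ), (Uᴴ * Matrix.diagonal v * U) k k
      = ∑ a, ((Θ a k : ℝ) : ℂ) * v a := by
    intro v
    simp only [Matrix.mul_apply, Matrix.diagonal_apply, Matrix.conjTranspose_apply,
      mul_ite, mul_zero, ite_mul, zero_mul, Finset.sum_ite_eq, Finset.sum_ite_eq',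
      Finset.mem_univ, if_true]
    exact Finset.sum_congr rfl fun a _ => by rw [← hTheta a k, starRingEnd_apply]; ring
  have hρdiag : ∀ j : Fin N, ρ j j = ∑ m, ((Θ j m : ℝ) : ℂ) * (lam m : ℂ) := by
    intro j
    rw [hρ]
    simp only [Matrix.mul_apply, Λ, Matrix.diagonal_apply, Matrix.conjTranspose_apply,
      mul_ite, mul_zero, ite_mul, zero_mul, Finset.sum_ite_eq, Finset.sum_ite_eq',
      Finset.mem_univ, if_true]
    refine Finset.sum_congr rfl fun m _ => ?_
    rw [← hTheta j m, starRingEnd_apply]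
    ring
  rw [key]
  simp only [Matrix.sub_apply, Matrix.smul_apply, Matrix.add_apply, Λ,
    Matrix.mul_diagonal, Matrix.diagonal_mul, hD, hC, ediag, smul_eq_mul]
  have hB : ∀ a j : Fin N, B a j = γ a j := fun a j => by
    by_cases h : a = j <;> simp [B, h, hγdiag]
  have hRHS : ((Θᵀ * B * Θ + Matrix.diagonal (Θᵀ *ᵥ d)) *ᵥ lam) k
      = (∑ m, (∑ j, (∑ a, Θ a k * γ a j) * Θ j m) * lam m)
        - (∑ j, Θ j k * ∑ i, γ i j) * lam k := by
    simp only [Matrix.mulVec, dotProduct, Matrix.add_apply, Matrix.mul_apply,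
      Matrix.transpose_apply, Matrix.diagonal_apply, hB, d, ite_mul, zero_mul,
      Finset.sum_ite_eq, Finset.mem_univ, if_true, add_mul, Finset.sum_add_distrib,
      mul_neg, neg_mul, Finset.sum_neg_distrib]
    ring
  rw [hRHS]
  push_cast
  simp only [hρdiag]
  have e2 : (∑ a : Fin N, ((Θ a k : ℝ) : ℂ) * ∑ j : Fin N, ((γ a j : ℝ) : ℂ)
        * ∑ m : Fin N, ((Θ j m : ℝ) : ℂ) * ((lam m : ℝ) : ℂ))
      = ∑ m : Fin N, (∑ j : Fin N, (∑ a : Fin N, ((Θ a k : ℝ) : ℂ) * ((γ a j : ℝ) : ℂ))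
        * ((Θ j m : ℝ) : ℂ)) * ((lam m : ℝ) : ℂ) := by
    simp only [Finset.mul_sum, Finset.sum_mul]
    conv_lhs => rw [Finset.sum_comm]
    conv_lhs => enter [2, j]; rw [Finset.sum_comm]
    conv_lhs => rw [Finset.sum_comm]
    exact Finset.sum_congr rfl fun m _ => Finset.sum_congr rfl fun j _ =>
      Finset.sum_congr rfl fun a _ => by ring
  rw [e2]
  ring
end

section
/- Let T > 0, let M : [0,T] → Matrix (Fin n) (Fin n) ℝ be continuous with M(t)_ij ≥ 0 for all t and all i ≠ j, and let λ : [0,T] → ℝⁿ be differentiable with λ'(t) = M(t) λ(t) for all t ∈ [0,T]. If every entry of λ(0) is nonnegative, then every entry of λ(t) is nonnegative for all t ∈ [0,T]. -/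
open Matrix Set Filter Topology

/-- If `M(t)` is a continuous family of Metzler matrices (nonnegative off-diagonal
entries) on `[0,T]` and `λ' = M(t) λ` with `λ(0)` entrywise nonnegative, then `λ(t)`
stays entrywise nonnegative on `[0,T]`. -/
theorem nonneg_invariant_of_metzler (n : ℕ) (hn : 0 < n) (T : ℝ) (hT : 0 < T)
    (M : ℝ → Matrix (Fin n) (Fin n) ℝ)
    (hMcont : ContinuousOn M (Set.Icc 0 T))
    (hMetzler : ∀ t ∈ Set.Icc (0 : ℝ) T, ∀ i j, i ≠ j → 0 ≤ M t i j)
    (lam : ℝ → Fin n → ℝ)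
    (hderiv : ∀ t ∈ Set.Icc (0 : ℝ) T, ∀ i,
      HasDerivAt (fun s => lam s i) ((M t).mulVec (lam t) i) t)
    (h0 : ∀ i, 0 ≤ lam 0 i) :
    ∀ t ∈ Set.Icc (0 : ℝ) T, ∀ i, 0 ≤ lam t i := by
  classical
  set N : ℝ → ℝ := fun y => max (-y) 0 with hNdef
  have hN0 : ∀ y, 0 ≤ N y := fun y => le_max_right _ _
  have hNzero : ∀ y : ℝ, 0 ≤ y → N y = 0 := fun y hy => max_eq_right (by linarith)
  set f : ℝ → ℝ := fun t => ∑ i, N (lam t i) with hfdef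
  have hf0 : ∀ t, 0 ≤ f t := fun t => Finset.sum_nonneg fun i _ => hN0 _
  -- continuity of each lam · i on Icc
  have hlamc : ∀ i, ContinuousOn (fun s => lam s i) (Icc 0 T) := fun i x hx =>
    ((hderiv x hx i).continuousAt).continuousWithinAt
  have hNc : Continuous N := (continuous_neg.max continuous_const)
  have hfc : ContinuousOn f (Icc 0 T) := by
    apply continuousOn_finset_sum
    intro i _
    exact hNc.comp_continuousOn (hlamc i)
  -- uniform bound on entries of M
  have hgc : ContinuousOn (fun x => ∑ i, ∑ j, |M x i j|) (Icc 0 T) := by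
    apply continuousOn_finset_sum; intro i _
    apply continuousOn_finset_sum; intro j _
    exact (continuous_abs.comp ((continuous_apply j).comp (continuous_apply i))).comp_continuousOn
      hMcont
  obtain ⟨C0, hC0⟩ := isCompact_Icc.exists_bound_of_continuousOn hgc
  set C : ℝ := max C0 0 with hCdef
  have hC : ∀ x ∈ Icc (0 : ℝ) T, ∀ i j, |M x i j| ≤ C := by
    intro x hx i j
    have h1 : |M x i j| ≤ ∑ j', |M x i j'| :=
      Finset.single_le_sum (f := fun j' => |M x i j'|) (fun j' _ => abs_nonneg _) (Finset.mem_univ j)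
    have h2 : ∑ j', |M x i j'| ≤ ∑ i', ∑ j', |M x i' j'| :=
      Finset.single_le_sum (f := fun i' => ∑ j', |M x i' j'|)
        (fun i' _ => Finset.sum_nonneg fun j' _ => abs_nonneg _) (Finset.mem_univ i)
    have h3 := hC0 x hx
    rw [Real.norm_eq_abs] at h3
    have := le_abs_self (∑ i', ∑ j', |M x i' j'|)
    calc |M x i j| ≤ ∑ i', ∑ j', |M x i' j'| := h1.trans h2
      _ ≤ C0 := this.trans h3
      _ ≤ C := le_max_left _ _
  have hCnn : 0 ≤ C := le_max_right _ _
  set K : ℝ := n * C with hKdef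
  -- per-coordinate slope bound
  have key : ∀ x ∈ Ico (0 : ℝ) T, ∀ i : Fin n, ∀ ε > (0 : ℝ),
      ∀ᶠ z in 𝓝[>] x, (z - x)⁻¹ * (N (lam z i) - N (lam x i)) <
        (∑ j, |M x i j| * N (lam x j)) + ε := by
    intro x hx i ε hε
    have hxIcc : x ∈ Icc (0 : ℝ) T := Ico_subset_Icc_self hx
    set d : ℝ := (M x).mulVec (lam x) i with hddef
    set b : ℝ := ∑ j, |M x i j| * N (lam x j) with hbdef
    have hb0 : 0 ≤ b := Finset.sum_nonneg fun j _ => mul_nonneg (abs_nonneg _) (hN0 _)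
    have hd : HasDerivAt (fun s => lam s i) d x := hderiv x hxIcc i
    have hdb : lam x i ≤ 0 → -d ≤ b := by
      intro hle
      have : -d = ∑ j, -(M x i j * lam x j) := by
        simp [hddef, Matrix.mulVec, dotProduct, Finset.sum_neg_distrib]
      rw [this, hbdef]
      apply Finset.sum_le_sum
      intro j _
      rcases eq_or_ne j i with rfl | hji
      · have hNi : N (lam x j) = -lam x j := max_eq_left (by linarith)
        rw [hNi]
        calc -(M x j j * lam x j) = M x j j * (-lam x j) := by ring
          _ ≤ |M x j j| * (-lam x j) := by
            apply mul_le_mul_of_nonneg_right (le_abs_self _) (by linarith)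
      · have hMij : 0 ≤ M x i j := hMetzler x hxIcc i j (Ne.symm hji)
        have h1 : -lam x j ≤ N (lam x j) := le_max_left _ _
        calc -(M x i j * lam x j) = M x i j * (-lam x j) := by ring
          _ ≤ M x i j * N (lam x j) := mul_le_mul_of_nonneg_left h1 hMij
          _ ≤ |M x i j| * N (lam x j) := mul_le_mul_of_nonneg_right (le_abs_self _) (hN0 _)
    -- slope tendsto
    have hslope : Tendsto (fun z => (z - x)⁻¹ * (lam z i - lam x i)) (𝓝[>] x) (𝓝 d) := by
      have h1 := hasDerivAt_iff_tendsto_slope.1 hd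
      have h2 : 𝓝[>] x ≤ 𝓝[≠] x := nhdsWithin_mono _ fun z hz => ne_of_gt hz
      exact (h1.mono_left h2).congr fun z => by simp [slope_def_field, div_eq_inv_mul]
    rcases lt_trichotomy (lam x i) 0 with hneg | hzero | hpos
    · -- negative case
      have hev : ∀ᶠ z in 𝓝[>] x, lam z i < 0 := by
        have := (hd.continuousAt.tendsto).eventually_lt_const hneg
        exact this.filter_mono nhdsWithin_le_nhds
      have hnd : -d < b + ε := by
        have := hdb hneg.le; linarith
      have h2 : ∀ᶠ z in 𝓝[>] x, -((z - x)⁻¹ * (lam z i - lam x i)) < b + ε :=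
        (hslope.neg).eventually_lt_const hnd
      filter_upwards [hev, h2] with z hz1 hz2
      have e1 : N (lam z i) = -lam z i := max_eq_left (by linarith)
      have e2 : N (lam x i) = -lam x i := max_eq_left (by linarith)
      calc (z - x)⁻¹ * (N (lam z i) - N (lam x i))
          = -((z - x)⁻¹ * (lam z i - lam x i)) := by rw [e1, e2]; ring
        _ < b + ε := hz2
    · -- zero case
      have hNx : N (lam x i) = 0 := by rw [hzero]; simp [hNdef]
      have hnd : max (-d) 0 < b + ε := by
        have := hdb hzero.le
        rcases le_total (-d) 0 with h | h
        · rw [max_eq_right h]; linarith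
        · rw [max_eq_left h]; linarith
      have htend : Tendsto (fun z => max (-((z - x)⁻¹ * (lam z i - lam x i))) 0) (𝓝[>] x)
          (𝓝 (max (-d) 0)) := (hslope.neg).max tendsto_const_nhds
      have h2 := htend.eventually_lt_const hnd
      filter_upwards [self_mem_nhdsWithin, h2] with z hz1 hz2
      have hzx : (0 : ℝ) < z - x := sub_pos.2 hz1
      have e1 : (z - x)⁻¹ * (N (lam z i) - N (lam x i)) =
          max (-((z - x)⁻¹ * (lam z i - lam x i))) 0 := by
        rw [hNx, sub_zero, hzero, sub_zero]
        have : (z - x)⁻¹ * max (-lam z i) 0 = max ((z - x)⁻¹ * (-lam z i)) ((z - x)⁻¹ * 0) := by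
          exact mul_max_of_nonneg _ _ (le_of_lt (inv_pos.2 hzx))
        simp only [hNdef]
        rw [this, mul_zero]
        ring_nf
      rw [e1]; exact hz2
    · -- positive case
      have hev : ∀ᶠ z in 𝓝[>] x, 0 < lam z i := by
        have := (hd.continuousAt.tendsto).eventually_const_lt hpos
        exact this.filter_mono nhdsWithin_le_nhds
      have hNx : N (lam x i) = 0 := hNzero _ hpos.le
      filter_upwards [hev] with z hz
      rw [hNx, hNzero _ hz.le, sub_zero, mul_zero]
      linarith
  -- Gronwall
  have main : ∀ x ∈ Icc (0 : ℝ) T, f x ≤ gronwallBound 0 K 0 (x - 0) := by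
    apply le_gronwallBound_of_liminf_deriv_right_le (f' := fun x => K * f x) hfc
    · intro x hx r hr
      apply Filter.Eventually.frequently
      set ε : ℝ := (r - K * f x) / n with hεdef
      have hnR : (0 : ℝ) < n := Nat.cast_pos.2 hn
      have hε : 0 < ε := div_pos (by linarith) hnR
      have H : ∀ᶠ z in 𝓝[>] x, ∀ i : Fin n, (z - x)⁻¹ * (N (lam z i) - N (lam x i)) <
          (∑ j, |M x i j| * N (lam x j)) + ε :=
        eventually_all.2 fun i => key x hx i ε hε
      filter_upwards [H, self_mem_nhdsWithin] with z hz hz1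
      have hxIcc : x ∈ Icc (0 : ℝ) T := Ico_subset_Icc_self hx
      have e1 : (z - x)⁻¹ * (f z - f x) =
          ∑ i, (z - x)⁻¹ * (N (lam z i) - N (lam x i)) := by
        rw [hfdef]
        rw [← Finset.sum_sub_distrib, Finset.mul_sum]
      rw [e1]
      haveI : Nonempty (Fin n) := ⟨⟨0, hn⟩⟩
      have h2 : ∑ i, (z - x)⁻¹ * (N (lam z i) - N (lam x i)) <
          ∑ i : Fin n, ((∑ j, |M x i j| * N (lam x j)) + ε) :=
        Finset.sum_lt_sum_of_nonempty Finset.univ_nonempty fun i _ => hz i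
      have h3 : ∑ i : Fin n, ((∑ j, |M x i j| * N (lam x j)) + ε) ≤ r := by
        have hb : ∀ i : Fin n, (∑ j, |M x i j| * N (lam x j)) ≤ C * f x := by
          intro i
          rw [hfdef, Finset.mul_sum]
          apply Finset.sum_le_sum
          intro j _
          exact mul_le_mul_of_nonneg_right (hC x hxIcc i j) (hN0 _)
        calc ∑ i : Fin n, ((∑ j, |M x i j| * N (lam x j)) + ε)
            ≤ ∑ _i : Fin n, (C * f x + ε) :=
              Finset.sum_le_sum fun i _ => add_le_add (hb i) (le_refl ε)
          _ = n * (C * f x) + n * ε := by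
              rw [Finset.sum_const, Finset.card_univ, Fintype.card_fin, nsmul_eq_mul]; ring
          _ = K * f x + (r - K * f x) := by
              rw [hKdef, hεdef]
              field_simp
              ring
          _ = r := by ring
      linarith
    · simp only [hfdef]
      apply le_of_eq
      apply Finset.sum_eq_zero
      intro i _
      exact hNzero _ (h0 i)
    · intro x _; linarith
  intro t ht i
  have h1 := main t ht
  rw [gronwallBound_ε0, zero_mul] at h1
  have h2 : f t = 0 := le_antisymm h1 (hf0 t)
  have h3 : N (lam t i) = 0 := by
    have := (Finset.sum_eq_zero_iff_of_nonneg (fun j _ => hN0 (lam t j))).1 h2 i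
      (Finset.mem_univ i)
    exact this
  have h4 : -lam t i ≤ 0 := by
    by_contra h
    push_neg at h
    have : N (lam t i) = -lam t i := max_eq_left h.le
    rw [this] at h3; linarith
  linarith
end

section
/- Let γ1, γ2 > 0 and reals λ2 > 0, 0 ≤ λ3 ≤ λ2, and define τ* = −(1/(γ1+γ2)) log((γ2 λ2 + (γ1+γ2) λ3)/(λ2 (γ1+2γ2))). Then τ* ≥ 0, and the functions λ2(τ) = λ2 e^{−(γ1+γ2)τ} and λ3(τ) = λ3 + (γ2/(γ1+γ2)) λ2 (1 − e^{−(γ1+γ2)τ}) satisfy λ2(τ*) = λ3(τ*) = (γ2 λ2 + (γ1+γ2) λ3)/(γ1+2γ2). -/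
/-- The critical time `τ*` at which the second and third eigenvalues of the 3-level
Λ system equilibrate under the ordered diagonal strategy: `τ* ≥ 0` and both
eigenvalue trajectories take the common value
`(γ2 λ2 + (γ1+γ2) λ3)/(γ1+2γ2)` at `τ*`. -/
theorem critical_time (γ1 γ2 l2 l3 : ℝ) (hγ1 : 0 < γ1) (hγ2 : 0 < γ2)
    (hl2 : 0 < l2) (hl3 : 0 ≤ l3) (hl32 : l3 ≤ l2) :
    let τstar : ℝ := -(1 / (γ1 + γ2)) *
      Real.log ((γ2 * l2 + (γ1 + γ2) * l3) / (l2 * (γ1 + 2 * γ2)))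
    0 ≤ τstar ∧
    l2 * Real.exp (-(γ1 + γ2) * τstar) = (γ2 * l2 + (γ1 + γ2) * l3) / (γ1 + 2 * γ2) ∧
    l3 + γ2 / (γ1 + γ2) * l2 * (1 - Real.exp (-(γ1 + γ2) * τstar))
      = (γ2 * l2 + (γ1 + γ2) * l3) / (γ1 + 2 * γ2) := by
  intro τstar
  have hs : 0 < γ1 + γ2 := by linarith
  have hd : 0 < γ1 + 2 * γ2 := by linarith
  set A : ℝ := (γ2 * l2 + (γ1 + γ2) * l3) / (l2 * (γ1 + 2 * γ2)) with hA
  have hApos : 0 < A := by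
    apply div_pos
    · nlinarith
    · positivity
  have hAle : A ≤ 1 := by
    rw [div_le_one (by positivity)]
    nlinarith
  have hexp : -(γ1 + γ2) * τstar = Real.log A := by
    show -(γ1 + γ2) * (-(1 / (γ1 + γ2)) * Real.log A) = Real.log A
    field_simp
  have hE : Real.exp (-(γ1 + γ2) * τstar) = A := by
    rw [hexp, Real.exp_log hApos]
  refine ⟨?_, ?_, ?_⟩
  · have hlog : Real.log A ≤ 0 := Real.log_nonpos hApos.le hAle
    have : 0 ≤ -(Real.log A) := by linarith
    have h1 : 0 < 1 / (γ1 + γ2) := by positivity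
    calc (0:ℝ) ≤ (1 / (γ1 + γ2)) * (-(Real.log A)) := by positivity
      _ = τstar := by ring
  · rw [hE, hA]; field_simp
  · rw [hE, hA]; field_simp; ring
end

section
/- Assume γ1 ≥ γ2 > 0, μ = (μ1, 0, μ3) with μ1 ≥ 0 ≥ μ3, and λ = (λ1, λ2, λ3) with λ1 ≥ λ2 ≥ λ3 ≥ 0. Then for every 3×3 doubly stochastic real matrix Θ there exists a 3×3 doubly stochastic real matrix Θ' with Θ'_13 = Θ'_31 = 0 such that F(Θ') ≥ F(Θ). -/
open Matrix Finset

/-- `Θ` is doubly stochastic: nonnegative entries, rows and columns summing to 1. -/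
def DoublyStochastic3 (Θ : Matrix (Fin 3) (Fin 3) ℝ) : Prop :=
  (∀ i j, 0 ≤ Θ i j) ∧ (∀ i, ∑ j : Fin 3, Θ i j = 1) ∧ (∀ j, ∑ i : Fin 3, Θ i j = 1)

/-- The matrix `B` of the 3-level Λ system: `B_12 = γ1`, `B_32 = γ2`, all other
entries zero. -/
def Bmat3 (γ1 γ2 : ℝ) : Matrix (Fin 3) (Fin 3) ℝ :=
  Matrix.of ![![0, γ1, 0], ![0, 0, 0], ![0, γ2, 0]]

/-- The vector `d = (0, −(γ1+γ2), 0)` of the 3-level Λ system. -/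
def dvec3 (γ1 γ2 : ℝ) : Fin 3 → ℝ := ![0, -(γ1 + γ2), 0]

/-- The cooling objective `F(Θ) = μᵀ (Θᵀ B Θ + Diag(Θᵀ d)) λ`. -/
def Fobj (γ1 γ2 : ℝ) (μ lam : Fin 3 → ℝ) (Θ : Matrix (Fin 3) (Fin 3) ℝ) : ℝ :=
  μ ⬝ᵥ ((Θᵀ * Bmat3 γ1 γ2 * Θ + Matrix.diagonal (Θᵀ.mulVec (dvec3 γ1 γ2))).mulVec lam)

/-- Ground-state coherences can be eliminated: for every doubly stochastic `Θ` there is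
a doubly stochastic `Θ'` with `Θ'_13 = Θ'_31 = 0` and `F(Θ') ≥ F(Θ)`. -/
theorem exists_no_ground_coherence (γ1 γ2 μ1 μ3 l1 l2 l3 : ℝ)
    (hγ : γ1 ≥ γ2) (hγ2 : 0 < γ2)
    (hμ1 : 0 ≤ μ1) (hμ3 : μ3 ≤ 0)
    (hl12 : l1 ≥ l2) (hl23 : l2 ≥ l3) (hl3 : 0 ≤ l3)
    (Θ : Matrix (Fin 3) (Fin 3) ℝ) (hΘ : DoublyStochastic3 Θ) :
    ∃ Θ' : Matrix (Fin 3) (Fin 3) ℝ, DoublyStochastic3 Θ' ∧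
      Θ' 0 2 = 0 ∧ Θ' 2 0 = 0 ∧
      Fobj γ1 γ2 ![μ1, 0, μ3] ![l1, l2, l3] Θ' ≥ Fobj γ1 γ2 ![μ1, 0, μ3] ![l1, l2, l3] Θ := by
  obtain ⟨hpos, hrow, hcol⟩ := hΘ
  have hr0 := hrow 0; have hr1 := hrow 1; have hr2 := hrow 2
  have hc0 := hcol 0; have hc1 := hcol 1; have hc2 := hcol 2
  simp only [Fin.sum_univ_three] at hr0 hr1 hr2 hc0 hc1 hc2
  refine ⟨Matrix.of ![![Θ 0 0 + Θ 2 0, Θ 1 0, 0],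
                     ![Θ 1 0, Θ 1 1, Θ 1 2],
                     ![0, Θ 1 2, Θ 2 2 + Θ 0 2]], ⟨?_, ?_, ?_⟩, rfl, rfl, ?_⟩
  · intro i j
    fin_cases i <;> fin_cases j <;> simp <;>
      first
        | positivity
        | exact add_nonneg (hpos _ _) (hpos _ _)
        | exact hpos _ _
  · intro i
    fin_cases i <;> simp [Fin.sum_univ_three] <;> linarith
  · intro j
    fin_cases j <;> simp [Fin.sum_univ_three] <;> linarith
  · have hS : 0 ≤ Θ 1 0 * l1 + Θ 1 1 * l2 + Θ 1 2 * l3 := by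
      have h10 := hpos 1 0; have h11 := hpos 1 1; have h12 := hpos 1 2
      have : 0 ≤ l2 := le_trans hl3 hl23
      have : 0 ≤ l1 := le_trans (le_trans hl3 hl23) hl12
      positivity
    simp only [Fobj, Bmat3, dvec3, ge_iff_le, Matrix.mulVec, dotProduct,
      Matrix.mul_apply, Matrix.transpose_apply, Matrix.add_apply, Matrix.diagonal,
      Matrix.of_apply, Fin.sum_univ_three, Matrix.cons_val', Matrix.cons_val_zero,
      Matrix.cons_val_one, Matrix.head_cons, Matrix.empty_val', Matrix.cons_val_fin_one,
      Matrix.head_fin_const, Matrix.cons_val_two, Matrix.tail_cons]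
    norm_num
    nlinarith [mul_nonneg (mul_nonneg hμ1 (sub_nonneg.2 hγ)) (mul_nonneg (hpos 2 0) hS),
      mul_nonneg (mul_nonneg (neg_nonneg.2 hμ3) (sub_nonneg.2 hγ)) (mul_nonneg (hpos 0 2) hS),
      hS, hpos 0 2, hpos 2 0]
end

section
/- The function F attains its maximum over the compact triangle T = {(x,y) : x ≥ 0, y ≥ 0, x + y ≤ 1} at some point of the boundary of T (the union of the three edges x = 0, y = 0 and x + y = 1). -/
/-- The restricted 3-level cooling objective
`F(x,y) = (γ1 μ1 (1−x) + γ2 μ3 (1−y))(λ2 + x(λ1−λ2) + y(λ3−λ2)) − (γ1+γ2)(μ1 x λ1 + μ3 y λ3)`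
attains its maximum over the triangle `T = {x ≥ 0, y ≥ 0, x + y ≤ 1}` at a boundary
point of `T`. -/
theorem max_on_boundary (γ1 γ2 μ1 μ3 l1 l2 l3 : ℝ)
    (hγ : γ1 ≥ γ2) (hγ2 : 0 < γ2)
    (hμ1 : 0 ≤ μ1) (hμ3 : μ3 ≤ 0)
    (hl12 : l1 ≥ l2) (hl23 : l2 ≥ l3) (hl3 : 0 ≤ l3) :
    let F : ℝ × ℝ → ℝ := fun p =>
      (γ1 * μ1 * (1 - p.1) + γ2 * μ3 * (1 - p.2))
        * (l2 + p.1 * (l1 - l2) + p.2 * (l3 - l2))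
      - (γ1 + γ2) * (μ1 * p.1 * l1 + μ3 * p.2 * l3)
    let T : Set (ℝ × ℝ) := {p | 0 ≤ p.1 ∧ 0 ≤ p.2 ∧ p.1 + p.2 ≤ 1}
    ∃ p ∈ T, (p.1 = 0 ∨ p.2 = 0 ∨ p.1 + p.2 = 1) ∧ ∀ q ∈ T, F q ≤ F p := by
  intro F T
  have hγ1 : 0 < γ1 := lt_of_lt_of_le hγ2 hγ
  by_cases h0 : γ1 * μ1 = 0 ∧ γ2 * μ3 = 0
  · -- then μ1 = 0 and μ3 = 0, so F ≡ 0
    have hμ1' : μ1 = 0 := by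
      rcases mul_eq_zero.mp h0.1 with h | h
      · exact absurd h (ne_of_gt hγ1)
      · exact h
    have hμ3' : μ3 = 0 := by
      rcases mul_eq_zero.mp h0.2 with h | h
      · exact absurd h (ne_of_gt hγ2)
      · exact h
    refine ⟨(0, 0), ⟨le_refl 0, le_refl 0, by norm_num⟩, Or.inl rfl, ?_⟩
    intro q hq
    simp only [F, hμ1', hμ3']
    norm_num
  · -- main case: direction d = (-γ2 μ3, γ1 μ1) along which F is linear
    set d1 : ℝ := -(γ2 * μ3) with hd1def
    set d2 : ℝ := γ1 * μ1 with hd2def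
    have hd1 : 0 ≤ d1 := by
      simp only [hd1def]
      nlinarith
    have hd2 : 0 ≤ d2 := by positivity
    have hdsum : 0 < d1 + d2 := by
      rcases lt_or_eq_of_le hd1 with h | h
      · linarith
      rcases lt_or_eq_of_le hd2 with h' | h'
      · linarith
      exact absurd ⟨h'.symm, by linarith [h]⟩ h0
    -- T is compact
    have hTclosed : IsClosed T := by
      have hTeq : T = {p : ℝ × ℝ | 0 ≤ p.1} ∩ {p | 0 ≤ p.2} ∩ {p | p.1 + p.2 ≤ 1} := by
        ext p
        simp only [T, Set.mem_inter_iff, Set.mem_setOf_eq]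
        tauto
      rw [hTeq]
      exact ((isClosed_le continuous_const continuous_fst).inter
        (isClosed_le continuous_const continuous_snd)).inter
        (isClosed_le (continuous_fst.add continuous_snd) continuous_const)
    have hTc : IsCompact T := by
      refine IsCompact.of_isClosed_subset (isCompact_Icc (a := ((0 : ℝ), (0 : ℝ)))
        (b := ((1 : ℝ), (1 : ℝ)))) hTclosed ?_
      rintro ⟨x, y⟩ ⟨hx, hy, hs⟩
      simp only [Set.mem_Icc, Prod.mk_le_mk]
      refine ⟨⟨hx, hy⟩, by linarith, by linarith⟩
    have hFc : Continuous F := by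
      simp only [F]
      fun_prop
    obtain ⟨p, hpT, hpmax⟩ := hTc.exists_isMaxOn ⟨(0, 0), ⟨le_refl 0, le_refl 0, by norm_num⟩⟩
      hFc.continuousOn
    have hpmax' : ∀ q ∈ T, F q ≤ F p := fun q hq => hpmax hq
    by_cases hb : p.1 = 0 ∨ p.2 = 0 ∨ p.1 + p.2 = 1
    · exact ⟨p, hpT, hb, hpmax'⟩
    push_neg at hb
    obtain ⟨hb1, hb2, hb3⟩ := hb
    obtain ⟨hx0, hy0, hs0⟩ := hpT
    have hx : 0 < p.1 := lt_of_le_of_ne hx0 (Ne.symm hb1)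
    have hy : 0 < p.2 := lt_of_le_of_ne hy0 (Ne.symm hb2)
    have hs : p.1 + p.2 < 1 := lt_of_le_of_ne hs0 hb3
    -- key: F is linear along direction (d1, d2)
    set L : ℝ := F (p.1 + d1, p.2 + d2) - F p with hLdef
    have key : ∀ s : ℝ, F (p.1 + s * d1, p.2 + s * d2) = F p + s * L := by
      intro s
      simp only [hLdef, F, hd1def, hd2def]
      ring
    -- move forward to the edge x + y = 1 to see L ≤ 0
    have hL : L ≤ 0 := by
      set s := (1 - p.1 - p.2) / (d1 + d2) with hsdef
      have hspos : 0 < s := div_pos (by linarith) hdsum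
      have hq : (p.1 + s * d1, p.2 + s * d2) ∈ T := by
        refine ⟨?_, ?_, ?_⟩
        · show 0 ≤ p.1 + s * d1
          nlinarith [mul_nonneg hspos.le hd1]
        · show 0 ≤ p.2 + s * d2
          nlinarith [mul_nonneg hspos.le hd2]
        · show p.1 + s * d1 + (p.2 + s * d2) ≤ 1
          have : p.1 + s * d1 + (p.2 + s * d2) = 1 := by
            simp only [hsdef]
            field_simp
            ring
          linarith
      have h1 := hpmax' _ hq
      rw [key s] at h1
      by_contra hLpos
      push_neg at hLpos
      have : 0 < s * L := mul_pos hspos hLpos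
      linarith
    -- move backward to an edge x = 0 or y = 0
    have hback : ∀ s : ℝ, s ≤ 0 → F p ≤ F (p.1 + s * d1, p.2 + s * d2) := by
      intro s hsle
      rw [key s]
      nlinarith [mul_nonneg (neg_nonneg.mpr hsle) (neg_nonneg.mpr hL)]
    rcases le_total (p.1 * d2) (p.2 * d1) with hc | hc
    · -- exit through x = 0; here d1 > 0
      have hd1pos : 0 < d1 := by
        rcases lt_or_eq_of_le hd1 with h | h
        · exact h
        · exfalso
          have hd2pos : 0 < d2 := by linarith
          nlinarith
      set s : ℝ := -(p.1 / d1) with hsdef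
      have hsnonpos : s ≤ 0 := by
        have : 0 ≤ p.1 / d1 := by positivity
        simp only [hsdef]
        linarith
      have hc1 : p.1 + s * d1 = 0 := by
        simp only [hsdef]
        field_simp
        ring
      have hdiv : p.1 / d1 * d2 ≤ p.2 := by
        rw [div_mul_eq_mul_div, div_le_iff₀ hd1pos]
        nlinarith
      have hc2 : 0 ≤ p.2 + s * d2 := by
        simp only [hsdef]
        linarith
      have hqT : ((p.1 + s * d1, p.2 + s * d2) : ℝ × ℝ) ∈ T := by
        refine ⟨le_of_eq hc1.symm, hc2, ?_⟩
        show p.1 + s * d1 + (p.2 + s * d2) ≤ 1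
        have h1 : s * d2 ≤ 0 := mul_nonpos_of_nonpos_of_nonneg hsnonpos hd2
        rw [hc1]
        linarith
      exact ⟨(p.1 + s * d1, p.2 + s * d2), hqT, Or.inl hc1,
        fun q hq => (hpmax' q hq).trans (hback s hsnonpos)⟩
    · -- exit through y = 0; here d2 > 0
      have hd2pos : 0 < d2 := by
        rcases lt_or_eq_of_le hd2 with h | h
        · exact h
        · exfalso
          have hd1pos : 0 < d1 := by linarith
          nlinarith
      set s : ℝ := -(p.2 / d2) with hsdef
      have hsnonpos : s ≤ 0 := by
        have : 0 ≤ p.2 / d2 := by positivity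
        simp only [hsdef]
        linarith
      have hc2 : p.2 + s * d2 = 0 := by
        simp only [hsdef]
        field_simp
        ring
      have hdiv : p.2 / d2 * d1 ≤ p.1 := by
        rw [div_mul_eq_mul_div, div_le_iff₀ hd2pos]
        nlinarith
      have hc1 : 0 ≤ p.1 + s * d1 := by
        simp only [hsdef]
        linarith
      have hqT : ((p.1 + s * d1, p.2 + s * d2) : ℝ × ℝ) ∈ T := by
        refine ⟨hc1, le_of_eq hc2.symm, ?_⟩
        show p.1 + s * d1 + (p.2 + s * d2) ≤ 1
        have h1 : s * d1 ≤ 0 := mul_nonpos_of_nonpos_of_nonneg hsnonpos hd1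
        rw [hc2]
        linarith
      exact ⟨(p.1 + s * d1, p.2 + s * d2), hqT, Or.inr (Or.inl hc2),
        fun q hq => (hpmax' q hq).trans (hback s hsnonpos)⟩
end

section
/- Let γ1 ≥ γ2 > 0, λ1 ≥ λ2 ≥ λ3 ≥ 0, and τ ≥ 0 be such that (γ1+2γ2) λ2 e^{−(γ1+γ2)τ} ≥ γ2 λ2 + (γ1+γ2) λ3. Set m = (γ1/(γ1+γ2))(1 − e^{−(γ1+γ2)τ}), μ1 = 1 − m and μ3 = −m. Then (λ3 − λ2)(γ1 μ1 + γ2 μ3) − γ2 μ3 λ2 − (γ1+γ2) μ3 λ3 ≤ 0. (This quantity is the partial derivative ∂F/∂y of the 3-level cooling objective at the corner (x,y) = (0,0) with the regime-one return-function gradient shifted so that μ2 = 0.) -/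
/-- The partial derivative `∂F/∂y` of the restricted cooling objective at the corner
`(0,0)` is nonpositive in the first regime (`τ ≤ τ*`), with the return-function
gradient `μ1 = 1 − m`, `μ2 = 0`, `μ3 = −m` where
`m = (γ1/(γ1+γ2))(1 − e^{−(γ1+γ2)τ})`. -/
theorem slope_y_nonpos_first_regime (γ1 γ2 l1 l2 l3 τ : ℝ)
    (hγ : γ1 ≥ γ2) (hγ2 : 0 < γ2)
    (hl12 : l1 ≥ l2) (hl23 : l2 ≥ l3) (hl3 : 0 ≤ l3) (hτ : 0 ≤ τ)
    (hcrit : (γ1 + 2 * γ2) * l2 * Real.exp (-(γ1 + γ2) * τ)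
      ≥ γ2 * l2 + (γ1 + γ2) * l3) :
    let m : ℝ := γ1 / (γ1 + γ2) * (1 - Real.exp (-(γ1 + γ2) * τ))
    let μ1 : ℝ := 1 - m
    let μ3 : ℝ := -m
    (l3 - l2) * (γ1 * μ1 + γ2 * μ3) - γ2 * μ3 * l2 - (γ1 + γ2) * μ3 * l3 ≤ 0 := by
  intro m μ1 μ3
  have hs : 0 < γ1 + γ2 := by linarith
  have hγ1 : (0:ℝ) ≤ γ1 := by linarith
  set E := Real.exp (-(γ1 + γ2) * τ) with hE
  have hm : m = γ1 / (γ1 + γ2) * (1 - E) := rfl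
  have hμ1 : μ1 = 1 - m := rfl
  have hμ3 : μ3 = -m := rfl
  rw [hμ1, hμ3, hm]
  rw [ge_iff_le, ← sub_nonneg] at hcrit
  have key : ((l3 - l2) * (γ1 * (1 - γ1 / (γ1 + γ2) * (1 - E)) +
      γ2 * -(γ1 / (γ1 + γ2) * (1 - E))) -
      γ2 * -(γ1 / (γ1 + γ2) * (1 - E)) * l2 -
      (γ1 + γ2) * -(γ1 / (γ1 + γ2) * (1 - E)) * l3) * (γ1 + γ2) ≤ 0 := by
    have hne : (γ1 + γ2) ≠ 0 := hs.ne'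
    field_simp
    nlinarith [mul_nonneg hcrit hγ1]
  nlinarith [key, hs]
end

section
/- Let γ1 ≥ γ2 > 0, let λ = (λ1, λ2, λ3) with λ1 ≥ λ2 ≥ λ3 ≥ 0, and let τ ≥ 0 satisfy (γ1+2γ2) λ2 e^{−(γ1+γ2)τ} ≥ γ2 λ2 + (γ1+γ2) λ3. Set μ = (1, (γ1/(γ1+γ2))(1 − e^{−(γ1+γ2)τ}), 0). Then for every 3×3 doubly stochastic real matrix Θ, F(Θ) ≤ F(I), where I is the 3×3 identity matrix. (Hamilton–Jacobi–Bellman verification of the ordered diagonal cooling strategy for the 3-level Λ system in the regime τ ≤ τ*.) -/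
open Matrix Finset

lemma Fobj_expand (γ1 γ2 m l1 l2 l3 : ℝ) (Θ : Matrix (Fin 3) (Fin 3) ℝ) :
    Fobj γ1 γ2 ![1,m,0] ![l1,l2,l3] Θ =
      ((γ1*Θ 0 0 + γ2*Θ 2 0) + m*(γ1*Θ 0 1 + γ2*Θ 2 1)) * (l1*Θ 1 0 + l2*Θ 1 1 + l3*Θ 1 2)
      - (γ1+γ2)*(l1*Θ 1 0 + m*l2*Θ 1 1) := by
  simp [Fobj, Bmat3, dvec3, Matrix.mulVec, Matrix.mul_apply, dotProduct,
    Fin.sum_univ_three, Matrix.diagonal, Matrix.transpose_apply, Matrix.add_apply]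
  ring

/-- Core quadratic inequality on the simplex. -/
lemma core_ineq (γ1 γ2 l1 l2 l3 m x y z : ℝ) (hγ : γ2 ≤ γ1) (hγ2 : 0 < γ2)
    (hl12 : l2 ≤ l1) (hl23 : l3 ≤ l2) (hl3 : 0 ≤ l3)
    (hm0 : 0 ≤ m) (hm1 : (γ1+γ2)*m ≤ γ1)
    (hc : (γ1+2*γ2)*m*l2 ≤ γ1*(l2-l3))
    (hx : 0 ≤ x) (hy : 0 ≤ y) (hz : 0 ≤ z) (hs : x+y+z = 1) :
    (γ1*(y+z) + m*γ1*x + m*γ2*z) * (l1*x+l2*y+l3*z) - (γ1+γ2)*(l1*x+m*l2*y)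
      ≤ (γ1 - (γ1+γ2)*m)*l2 := by
  have hγ1 : (0:ℝ) < γ1 := lt_of_lt_of_le hγ2 hγ
  have hm1' : m ≤ 1 := by nlinarith
  have hz1 : z ≤ 1 := by linarith
  have hl2 : (0:ℝ) ≤ l2 := le_trans hl3 hl23
  have hcross : 0 ≤ γ1*(1-m)*(l2-l3) + m*γ2*(l1-l2) := by
    have t1 : 0 ≤ γ1*(1-m)*(l2-l3) :=
      mul_nonneg (mul_nonneg hγ1.le (by linarith)) (by linarith)
    have t2 : 0 ≤ m*γ2*(l1-l2) :=
      mul_nonneg (mul_nonneg hm0 hγ2.le) (by linarith)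
    linarith
  have hc1 : γ1*(1-m)*(l2-l3) + m*γ2*(l1-l2) ≤ γ2*l1 + (2*γ1 - (2*γ1+γ2)*m)*l2 := by
    have ta : 0 ≤ (γ1-(γ1+γ2)*m)*l2 := mul_nonneg (by linarith) hl2
    have tb : 0 ≤ γ1*(1-m)*l3 :=
      mul_nonneg (mul_nonneg hγ1.le (by linarith)) hl3
    have tc : 0 ≤ γ2*(1-m)*(l1-l2) :=
      mul_nonneg (mul_nonneg hγ2.le (by linarith)) (by linarith)
    have td : 0 ≤ γ2*l2 := mul_nonneg hγ2.le hl2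
    nlinarith [ta, tb, tc, td]
  have h1 : 0 ≤ x * ((γ2*l1 + (2*γ1-(2*γ1+γ2)*m)*l2)
      - (γ1*(1-m)*(l2-l3) + m*γ2*(l1-l2))*z) := by
    refine mul_nonneg hx ?_
    have := mul_le_mul_of_nonneg_left hz1 hcross
    nlinarith [this, hc1]
  have h2 : 0 ≤ z * (γ1*(l2-l3) - (γ1+2*γ2)*m*l2) :=
    mul_nonneg hz (by linarith)
  have h3 : 0 ≤ γ1*(1-m)*(l1-l2)*x^2 :=
    mul_nonneg (mul_nonneg (mul_nonneg hγ1.le (by linarith)) (by linarith)) (sq_nonneg x)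
  have h4 : 0 ≤ m*γ2*(l2-l3)*z^2 :=
    mul_nonneg (mul_nonneg (mul_nonneg hm0 hγ2.le) (by linarith)) (sq_nonneg z)
  have hyv : y = 1 - x - z := by linarith
  subst hyv
  nlinarith [h1, h2, h3, h4]


lemma Fobj_one (γ1 γ2 m l1 l2 l3 : ℝ) :
    Fobj γ1 γ2 ![1,m,0] ![l1,l2,l3] (1 : Matrix (Fin 3) (Fin 3) ℝ)
      = (γ1 - (γ1+γ2)*m)*l2 := by
  simp [Fobj, Bmat3, dvec3, Matrix.mulVec, Matrix.mul_apply, dotProduct,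
    Fin.sum_univ_three, Matrix.diagonal, Matrix.transpose_apply, Matrix.add_apply,
    Matrix.one_apply]
  ring

/-- Main bound with abstract `m`. -/
lemma main_aux (γ1 γ2 l1 l2 l3 m : ℝ)
    (hγ : γ2 ≤ γ1) (hγ2 : 0 < γ2)
    (hl12 : l2 ≤ l1) (hl23 : l3 ≤ l2) (hl3 : 0 ≤ l3)
    (hm0 : 0 ≤ m) (hm1 : (γ1+γ2)*m ≤ γ1)
    (hc : (γ1+2*γ2)*m*l2 ≤ γ1*(l2-l3))
    (Θ : Matrix (Fin 3) (Fin 3) ℝ) (hΘ : DoublyStochastic3 Θ) :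
    Fobj γ1 γ2 ![1,m,0] ![l1,l2,l3] Θ
      ≤ Fobj γ1 γ2 ![1,m,0] ![l1,l2,l3] (1 : Matrix (Fin 3) (Fin 3) ℝ) := by
  obtain ⟨hpos, hrow, hcol⟩ := hΘ
  have hγ1 : (0:ℝ) < γ1 := lt_of_lt_of_le hγ2 hγ
  have hG : (0:ℝ) < γ1 + γ2 := by linarith
  have hm1' : m ≤ 1 := by nlinarith
  have hrow0 := hrow 0; have hrow1 := hrow 1; have hrow2 := hrow 2
  have hcol0 := hcol 0; have hcol1 := hcol 1; have hcol2 := hcol 2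
  simp [Fin.sum_univ_three] at hrow0 hrow1 hrow2 hcol0 hcol1 hcol2
  rw [Fobj_expand, Fobj_one]
  have hL : 0 ≤ l1*Θ 1 0 + l2*Θ 1 1 + l3*Θ 1 2 := by
    have h2 : (0:ℝ) ≤ l2 := le_trans hl3 hl23
    have h1 : (0:ℝ) ≤ l1 := le_trans h2 hl12
    have := hpos 1 0; have := hpos 1 1; have := hpos 1 2
    positivity
  have key : γ1*(Θ 1 1 + Θ 1 2) + m*γ1*Θ 1 0 + m*γ2*Θ 1 2
      - ((γ1*Θ 0 0 + γ2*Θ 2 0) + m*(γ1*Θ 0 1 + γ2*Θ 2 1))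
      = (γ1-γ2)*((1-m)*Θ 2 0 + m*Θ 0 2) := by
    linear_combination (-(γ1-γ2)*m)*hrow0 + (γ1+m*γ2)*hrow1
      + (-γ1+(γ1-γ2)*m)*hcol0 + (-m*γ2)*hcol1
  have hS : (γ1*Θ 0 0 + γ2*Θ 2 0) + m*(γ1*Θ 0 1 + γ2*Θ 2 1)
      ≤ γ1*(Θ 1 1 + Θ 1 2) + m*γ1*Θ 1 0 + m*γ2*Θ 1 2 := by
    have f1 : 0 ≤ (γ1-γ2)*((1-m)*Θ 2 0) :=
      mul_nonneg (by linarith) (mul_nonneg (by linarith) (hpos 2 0))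
    have f2 : 0 ≤ (γ1-γ2)*(m*Θ 0 2) :=
      mul_nonneg (by linarith) (mul_nonneg hm0 (hpos 0 2))
    nlinarith [key, f1, f2]
  have hstep := mul_le_mul_of_nonneg_right hS hL
  have hcore := core_ineq γ1 γ2 l1 l2 l3 m (Θ 1 0) (Θ 1 1) (Θ 1 2) hγ hγ2 hl12 hl23 hl3
    hm0 hm1 hc (hpos 1 0) (hpos 1 1) (hpos 1 2) hrow1
  nlinarith [hstep, hcore]

/-- HJB verification of the ordered diagonal strategy in the first regime (`τ ≤ τ*`):
the identity maximizes `F` over doubly stochastic matrices, with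
`μ = (1, (γ1/(γ1+γ2))(1 − e^{−(γ1+γ2)τ}), 0)`. -/
theorem hjb_first_regime (γ1 γ2 l1 l2 l3 τ : ℝ)
    (hγ : γ1 ≥ γ2) (hγ2 : 0 < γ2)
    (hl12 : l1 ≥ l2) (hl23 : l2 ≥ l3) (hl3 : 0 ≤ l3) (hτ : 0 ≤ τ)
    (hcrit : (γ1 + 2 * γ2) * l2 * Real.exp (-(γ1 + γ2) * τ)
      ≥ γ2 * l2 + (γ1 + γ2) * l3) :
    ∀ Θ : Matrix (Fin 3) (Fin 3) ℝ, DoublyStochastic3 Θ →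
      Fobj γ1 γ2 ![1, γ1 / (γ1 + γ2) * (1 - Real.exp (-(γ1 + γ2) * τ)), 0] ![l1, l2, l3] Θ
        ≤ Fobj γ1 γ2 ![1, γ1 / (γ1 + γ2) * (1 - Real.exp (-(γ1 + γ2) * τ)), 0] ![l1, l2, l3]
            (1 : Matrix (Fin 3) (Fin 3) ℝ) := by
  intro Θ hΘ
  have hγ1 : (0:ℝ) < γ1 := lt_of_lt_of_le hγ2 hγ
  have hG : (0:ℝ) < γ1 + γ2 := by linarith
  have hE0 : 0 < Real.exp (-(γ1 + γ2) * τ) := Real.exp_pos _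
  have hE1 : Real.exp (-(γ1 + γ2) * τ) ≤ 1 := by
    rw [show (1:ℝ) = Real.exp 0 by simp]
    exact Real.exp_le_exp.mpr (by nlinarith)
  set E : ℝ := Real.exp (-(γ1 + γ2) * τ) with hE
  have hm0 : 0 ≤ γ1 / (γ1 + γ2) * (1 - E) :=
    mul_nonneg (div_nonneg hγ1.le hG.le) (by linarith)
  have hGm : (γ1+γ2)*(γ1 / (γ1 + γ2) * (1 - E)) = γ1*(1-E) := by
    field_simp
  have hm1 : (γ1+γ2)*(γ1 / (γ1 + γ2) * (1 - E)) ≤ γ1 := by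
    rw [hGm]; nlinarith [mul_nonneg hγ1.le hE0.le]
  have hc : (γ1+2*γ2)*(γ1 / (γ1 + γ2) * (1 - E))*l2 ≤ γ1*(l2-l3) := by
    have hp := mul_le_mul_of_nonneg_left hcrit hγ1.le
    have h5 : (γ1+γ2)*((γ1+2*γ2)*(γ1 / (γ1 + γ2) * (1 - E))*l2) ≤ (γ1+γ2)*(γ1*(l2-l3)) := by
      have h6 : (γ1+2*γ2)*((γ1+γ2)*(γ1 / (γ1 + γ2) * (1 - E)))*l2 ≤ γ1*((γ1+γ2)*(l2-l3)) := by
        rw [hGm]; nlinarith [hp]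
      nlinarith [h6]
    exact (mul_le_mul_iff_right₀ hG).mp h5
  exact main_aux γ1 γ2 l1 l2 l3 _ hγ hγ2 hl12 hl23 hl3 hm0 hm1 hc Θ hΘ
end

section
/- Let γ1 ≥ γ2 > 0, let λ = (λ1, λ2, λ3) with λ1 ≥ λ2 ≥ λ3 ≥ 0 and λ2 > 0, and let s ≥ 0. Set μ = (0, −((2γ2 λ2 + γ1 λ3)/(λ2 (γ1+2γ2))) e^{−(γ1/2)s}, −e^{−(γ1/2)s}). Then for every 3×3 doubly stochastic real matrix Θ, F(Θ) ≤ F(I), where I is the 3×3 identity matrix. (Hamilton–Jacobi–Bellman verification of the ordered diagonal cooling strategy for the 3-level Λ system in the regime τ > τ*.) -/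
open Matrix Finset

set_option maxHeartbeats 1000000 in
theorem keylem (γ1 γ2 l1 l2 l3 a b e p q r t : ℝ)
    (hγ : γ1 ≥ γ2) (hγ2 : 0 < γ2)
    (hl12 : l1 ≥ l2) (hl23 : l2 ≥ l3) (hl3 : 0 ≤ l3) (hl2 : 0 < l2)
    (ha : 0 ≤ a) (hb : 0 ≤ b) (he : 0 ≤ e) (hp : 0 ≤ p) (hq : 0 ≤ q) (hr : 0 ≤ r)
    (ht : 0 ≤ t)
    (hc2 : a + b + e = 1) (hc3 : p + q + r = 1) (hrow2 : t + b + q = 1)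
    (hrow1 : a + p ≤ 1) (hrow3 : e + r ≤ 1) :
    0 ≤ (2*γ2*l2 + γ1*l3) * ((γ1*a + γ2*e) * (t*l1 + b*l2 + q*l3) - (γ1+γ2)*b*l2)
      + (l2*(γ1 + 2*γ2)) * ((γ1*p + γ2*r) * (t*l1 + b*l2 + q*l3) - (γ1+γ2)*q*l3)
      + (γ1+γ2)*(2*γ2*l2 + γ1*l3)*l2 - γ2*(l2*(γ1 + 2*γ2))*l2 := by
  have he' : e = 1 - a - b := by linarith
  have hr' : r = 1 - p - q := by linarith
  have ht' : t = 1 - b - q := by linarith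
  subst he' hr' ht'
  have hγ1 : 0 < γ1 := lt_of_lt_of_le hγ2 hγ
  have hl2' : 0 ≤ l2 := hl2.le
  have hl1 : 0 ≤ l1 := by linarith
  have hN : 0 ≤ 2*γ2*l2 + γ1*l3 := by positivity
  have hL : 0 ≤ (1-b-q)*l1 + b*l2 + q*l3 := by
    apply add_nonneg (add_nonneg (mul_nonneg ht hl1) (mul_nonneg hb hl2'))
      (mul_nonneg hq hl3)
  have hq1 : q ≤ 1 := by linarith
  have haptz : 0 ≤ a + p - (1-b-q) := by linarith
  have hS1 : 0 ≤ (γ1-γ2) * ((1-b-q)*l1 + b*l2 + q*l3) *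
      ((2*γ2*l2 + γ1*l3)*(a+p-(1-b-q)) + γ1*(l2-l3)*p) := by
    apply mul_nonneg (mul_nonneg (by linarith) hL)
    apply add_nonneg (mul_nonneg hN haptz)
    exact mul_nonneg (mul_nonneg hγ1.le (by linarith)) hp
  have hS2 : 0 ≤ (l1-l2) * (1-b-q) *
      ((2*γ2*l2 + γ1*l3)*(γ1*(1-b-q) + γ2*q) + (l2*(γ1+2*γ2))*γ2*(1-q)) := by
    apply mul_nonneg (mul_nonneg (by linarith) ht)
    apply add_nonneg (mul_nonneg hN (add_nonneg (mul_nonneg hγ1.le ht) (mul_nonneg hγ2.le hq)))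
    exact mul_nonneg (mul_nonneg (by positivity) hγ2.le) (by linarith)
  have hS3 : 0 ≤ (1-b-q) * (2*γ2*l2 + γ1*l3) * (γ1*(l2*(1-q) + l3*q) + (γ1+γ2)*l2) := by
    apply mul_nonneg (mul_nonneg ht hN)
    have h0 : 0 ≤ l2*(1-q) + l3*q :=
      add_nonneg (mul_nonneg hl2' (by linarith)) (mul_nonneg hl3 hq)
    apply add_nonneg (mul_nonneg hγ1.le h0)
    exact mul_nonneg (by linarith) hl2'
  have hS4 : 0 ≤ γ1*γ2*(l2-l3)^2*q^2 := by positivity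
  nlinarith [hS1, hS2, hS3, hS4]

set_option maxHeartbeats 4000000 in
/-- HJB verification of the ordered diagonal strategy in the second regime (`τ > τ*`):
the identity maximizes `F` over doubly stochastic matrices, with
`μ = (0, −((2γ2 λ2 + γ1 λ3)/(λ2(γ1+2γ2))) e^{−(γ1/2)s}, −e^{−(γ1/2)s})`. -/
theorem hjb_second_regime (γ1 γ2 l1 l2 l3 s : ℝ)
    (hγ : γ1 ≥ γ2) (hγ2 : 0 < γ2)
    (hl12 : l1 ≥ l2) (hl23 : l2 ≥ l3) (hl3 : 0 ≤ l3) (hl2 : 0 < l2) (hs : 0 ≤ s) :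
    ∀ Θ : Matrix (Fin 3) (Fin 3) ℝ, DoublyStochastic3 Θ →
      Fobj γ1 γ2
          ![0, -((2 * γ2 * l2 + γ1 * l3) / (l2 * (γ1 + 2 * γ2))) * Real.exp (-(γ1 / 2) * s),
            -Real.exp (-(γ1 / 2) * s)] ![l1, l2, l3] Θ
        ≤ Fobj γ1 γ2
            ![0, -((2 * γ2 * l2 + γ1 * l3) / (l2 * (γ1 + 2 * γ2))) * Real.exp (-(γ1 / 2) * s),
              -Real.exp (-(γ1 / 2) * s)] ![l1, l2, l3]
            (1 : Matrix (Fin 3) (Fin 3) ℝ) := by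
  intro Θ hΘ
  obtain ⟨hpos, hrow, hcol⟩ := hΘ
  have hγ1 : 0 < γ1 := lt_of_lt_of_le hγ2 hγ
  have hr0 := hrow 0; have hr1 := hrow 1; have hr2 := hrow 2
  have hc1 := hcol 1; have hc2 := hcol 2
  simp only [Fin.sum_univ_three] at hr0 hr1 hr2 hc1 hc2
  have key := keylem γ1 γ2 l1 l2 l3 (Θ 0 1) (Θ 1 1) (Θ 2 1) (Θ 0 2) (Θ 1 2) (Θ 2 2) (Θ 1 0)
    hγ hγ2 hl12 hl23 hl3 hl2 (hpos 0 1) (hpos 1 1) (hpos 2 1) (hpos 0 2) (hpos 1 2)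
    (hpos 2 2) (hpos 1 0) hc1 hc2 hr1
    (by linarith [hpos 0 0]) (by linarith [hpos 2 0])
  rw [← sub_nonneg]
  have hD : (0:ℝ) ≠ l2 * (γ1 + 2 * γ2) := by positivity
  have heq : Fobj γ1 γ2
          ![0, -((2 * γ2 * l2 + γ1 * l3) / (l2 * (γ1 + 2 * γ2))) * Real.exp (-(γ1 / 2) * s),
            -Real.exp (-(γ1 / 2) * s)] ![l1, l2, l3] (1 : Matrix (Fin 3) (Fin 3) ℝ)
      - Fobj γ1 γ2
          ![0, -((2 * γ2 * l2 + γ1 * l3) / (l2 * (γ1 + 2 * γ2))) * Real.exp (-(γ1 / 2) * s),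
            -Real.exp (-(γ1 / 2) * s)] ![l1, l2, l3] Θ
      = (Real.exp (-(γ1 / 2) * s) / (l2 * (γ1 + 2 * γ2))) *
        ((2*γ2*l2 + γ1*l3) * ((γ1*(Θ 0 1) + γ2*(Θ 2 1)) * ((Θ 1 0)*l1 + (Θ 1 1)*l2 + (Θ 1 2)*l3)
            - (γ1+γ2)*(Θ 1 1)*l2)
          + (l2*(γ1 + 2*γ2)) * ((γ1*(Θ 0 2) + γ2*(Θ 2 2)) * ((Θ 1 0)*l1 + (Θ 1 1)*l2 + (Θ 1 2)*l3)
            - (γ1+γ2)*(Θ 1 2)*l3)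
          + (γ1+γ2)*(2*γ2*l2 + γ1*l3)*l2 - γ2*(l2*(γ1 + 2*γ2))*l2) := by
    simp only [Fobj, Bmat3, dvec3, dotProduct, mulVec, Matrix.add_apply,
      Matrix.mul_apply, Fin.sum_univ_three, Matrix.diagonal_apply,
      Matrix.transpose_apply, Matrix.of_apply, Matrix.cons_val', Matrix.cons_val_zero,
      Matrix.cons_val_one, Matrix.head_cons, Matrix.head_fin_const, Matrix.cons_val_fin_one,
      Matrix.empty_val', Matrix.cons_val_two, Matrix.tail_cons, Matrix.one_apply,
      Fin.isValue, Fin.reduceEq, if_true, if_false, reduceIte]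
    field_simp
    ring
  rw [heq]
  exact mul_nonneg (by positivity) key
end
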